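/- Let F = ℚ(√2, √(pq)) be the real biquadratic field containing the three real quadratic fields ℚ(√2), ℚ(√(pq)), ℚ(√(2pq)). For all exponents j, k, l ∈ {0, 1}, the element (2 + √2)·ε₂^j·ε_{pq}^k·ε_{2pq}^l is not the square of any element of F. -/

import Mathlib

open IntermediateField Polynomial

open IntermediateField Polynomial

/-- Representation of elements of a quadratic extension K(r) with r*r ∈ K. -/
lemma rep_quad {K : Type*} [Field K] [Algebra K ℝ] (r : ℝ) (c : K)
    (hc : r * r = algebraMap K ℝ c) {x : ℝ}
    (hx : x ∈ IntermediateField.adjoin K {r}) :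
    ∃ e f : K, x = algebraMap K ℝ e + algebraMap K ℝ f * r := by
  have hint : IsIntegral K r :=
    ⟨X ^ 2 - C c, monic_X_pow_sub_C c two_ne_zero, by
      simp [sq, hc]⟩
  let S : Subalgebra K ℝ :=
  { carrier := {x | ∃ e f : K, x = algebraMap K ℝ e + algebraMap K ℝ f * r}
    mul_mem' := by
      rintro x y ⟨e, f, rfl⟩ ⟨e', f', rfl⟩
      exact ⟨e * e' + c * f * f', e * f' + e' * f, by
        simp only [map_add, map_mul]
        linear_combination (algebraMap K ℝ f * algebraMap K ℝ f') * hc⟩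
    add_mem' := by
      rintro x y ⟨e, f, rfl⟩ ⟨e', f', rfl⟩
      exact ⟨e + e', f + f', by simp only [map_add]; ring⟩
    one_mem' := ⟨1, 0, by simp⟩
    zero_mem' := ⟨0, 0, by simp⟩
    algebraMap_mem' := fun a => ⟨a, 0, by simp⟩ }
  have halg : ∀ y ∈ ({r} : Set ℝ), IsAlgebraic K y := by
    rintro y rfl
    exact hint.isAlgebraic
  have h1 : (IntermediateField.adjoin K {r}).toSubalgebra = Algebra.adjoin K {r} :=
    IntermediateField.adjoin_toSubalgebra_of_isAlgebraic halg
  have h2 : Algebra.adjoin K {r} ≤ S :=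
    Algebra.adjoin_le (Set.singleton_subset_iff.mpr ⟨0, 1, by simp⟩)
  have : x ∈ Algebra.adjoin K {r} := by
    rw [← h1]; exact hx
  exact h2 this

lemma nsq_pq {p q : ℕ} (hp : p.Prime) (hq : q.Prime) (hpq : p ≠ q) :
    ¬ IsSquare (p * q) := by
  rintro ⟨r, hr⟩
  have hpr : p ∣ r := hp.dvd_of_dvd_pow (n := 2) (by rw [sq, ← hr]; exact ⟨q, rfl⟩)
  obtain ⟨r', rfl⟩ := hpr
  have : q = p * r' ^ 2 := by
    have hp0 : 0 < p := hp.pos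
    nlinarith [hr]
  exact hpq (((Nat.prime_dvd_prime_iff_eq hp hq).mp ⟨r' ^ 2, this⟩).symm ▸ rfl)

lemma nsq_2pq {p q : ℕ} (hp : p.Prime) (hq : q.Prime) (hp2 : p ≠ 2) (hq2 : q ≠ 2) :
    ¬ IsSquare (2 * p * q) := by
  rintro ⟨r, hr⟩
  have h2r : 2 ∣ r :=
    (Nat.prime_two.dvd_of_dvd_pow (n := 2) (by rw [sq, ← hr]; exact ⟨p * q, by ring⟩))
  obtain ⟨r', rfl⟩ := h2r
  have h2 : p * q = 2 * r' ^ 2 := by nlinarith [hr]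
  have : 2 ∣ p * q := ⟨r' ^ 2, h2⟩
  rcases (Nat.prime_two.dvd_mul).mp this with h | h
  · exact hp2 ((Nat.prime_dvd_prime_iff_eq Nat.prime_two hp).mp h).symm
  · exact hq2 ((Nat.prime_dvd_prime_iff_eq Nat.prime_two hq).mp h).symm

/-- No element e + f√n with e,f ∈ ℚ has square 2, when n and 2n are non-squares. -/
lemma no_sqrt2 {n : ℕ} (h1 : ¬ IsSquare n) (h2 : ¬ IsSquare (2 * n)) (e f : ℚ)
    (h : ((e : ℝ) + (f : ℝ) * Real.sqrt (n : ℝ)) ^ 2 = 2) : False := by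
  have hm0 : (0:ℝ) ≤ (n : ℝ) := by positivity
  have hmm : Real.sqrt n * Real.sqrt n = (n : ℝ) := Real.mul_self_sqrt hm0
  have hirrm : Irrational (Real.sqrt n) := irrational_sqrt_natCast_iff.mpr h1
  have hirr2m : Irrational (Real.sqrt ((2 * n : ℕ) : ℝ)) :=
    irrational_sqrt_natCast_iff.mpr h2
  have hkey : ((2 * e * f : ℚ) : ℝ) * Real.sqrt n = ((2 - e ^ 2 - f ^ 2 * (n:ℚ) : ℚ) : ℝ) := by
    push_cast
    linear_combination h - (f:ℝ)^2 * hmm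
  by_cases hef : e * f = 0
  · rcases mul_eq_zero.mp hef with he | hf
    · subst he
      have hfm : ((f * (n:ℚ) : ℚ) : ℝ) ^ 2 = ((2 * n : ℕ) : ℝ) := by
        push_cast at h ⊢
        linear_combination (n:ℝ) * h - (f:ℝ)^2 * (n:ℝ) * hmm
      have : Real.sqrt ((2 * n : ℕ) : ℝ) = ((|f * (n:ℚ)| : ℚ) : ℝ) := by
        rw [← hfm, Rat.cast_abs, ← Real.sqrt_sq_eq_abs]
      exact hirr2m ⟨_, this.symm⟩
    · subst hf
      have he2 : ((e : ℚ) : ℝ) ^ 2 = 2 := by push_cast at h ⊢; linarith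
      have : Real.sqrt 2 = ((|e| : ℚ) : ℝ) := by
        rw [← he2, Rat.cast_abs, ← Real.sqrt_sq_eq_abs]
      exact irrational_sqrt_two ⟨|e|, this.symm⟩
  · have h2ef : ((2 * e * f : ℚ) : ℝ) ≠ 0 := by
      push_cast
      intro hc
      apply hef
      have : (2:ℝ) * e * f = 0 := hc
      rcases mul_eq_zero.mp this with h' | h'
      · rcases mul_eq_zero.mp h' with h'' | h''
        · norm_num at h''
        · exact_mod_cast mul_eq_zero_of_left (by exact_mod_cast h'') f
      · exact_mod_cast mul_eq_zero_of_right e (by exact_mod_cast h')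
    have : Real.sqrt n = (((2 - e ^ 2 - f ^ 2 * (n:ℚ)) / (2 * e * f) : ℚ) : ℝ) := by
      rw [Rat.cast_div, ← hkey, mul_comm, mul_div_assoc, div_self h2ef, mul_one]
    exact hirrm ⟨_, this.symm⟩

/-- A rational number which is a product of two algebraic integers whose inverses are
also algebraic integers must be ±1. -/
lemma rat_unit (x y : ℝ) (hx : IsIntegral ℤ x) (hy : IsIntegral ℤ y)
    (hx' : IsIntegral ℤ x⁻¹) (hy' : IsIntegral ℤ y⁻¹)
    (hx0 : x ≠ 0) (hy0 : y ≠ 0) (n : ℚ) (hn : x * y = (n : ℝ)) :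
    n = 1 ∨ n = -1 := by
  have hn0 : n ≠ 0 := by
    intro h
    rw [h] at hn
    exact (mul_ne_zero hx0 hy0) (by exact_mod_cast hn)
  have hratint : ∀ r : ℚ, IsIntegral ℤ ((r : ℝ)) → IsIntegral ℤ r := by
    intro r hr
    have hinj : Function.Injective (algebraMap ℚ ℝ) := (algebraMap ℚ ℝ).injective
    apply (isIntegral_algHom_iff (x := r) ((algebraMap ℚ ℝ).toIntAlgHom) hinj).mp
    simpa [RingHom.toIntAlgHom, eq_ratCast] using hr
  have hnint : IsIntegral ℤ n := hratint n (hn ▸ hx.mul hy)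
  have hninv : IsIntegral ℤ n⁻¹ := by
    apply hratint
    have : ((n⁻¹ : ℚ) : ℝ) = x⁻¹ * y⁻¹ := by
      rw [Rat.cast_inv, ← hn, mul_inv]
    exact this ▸ hx'.mul hy'
  obtain ⟨z, hz⟩ := IsIntegrallyClosed.isIntegral_iff.mp hnint
  obtain ⟨z', hz'⟩ := IsIntegrallyClosed.isIntegral_iff.mp hninv
  have hzz' : z * z' = 1 := by
    have : ((z * z' : ℤ) : ℚ) = 1 := by
      push_cast
      rw [show ((z:ℚ)) = n from by exact_mod_cast hz,
        show ((z':ℚ)) = n⁻¹ from by exact_mod_cast hz']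
      field_simp
    exact_mod_cast this
  rcases Int.eq_one_or_neg_one_of_mul_eq_one' hzz' with ⟨h1, _⟩ | ⟨h1, _⟩
  · left; rw [← hz, h1]; norm_num
  · right; rw [← hz, h1]; norm_num

/-- The conjugation embedding of L(√2) over L, sending √2 to -√2. -/
lemma conj_data (L : IntermediateField ℚ ℝ) (hL : ∀ b : L, b ^ 2 ≠ 2) :
    ∃ σ : L⟮Real.sqrt 2⟯ →ₐ[L] ℝ, σ (AdjoinSimple.gen L (Real.sqrt 2)) = -Real.sqrt 2 := by
  have hs2 : Real.sqrt 2 ^ 2 = (2:ℝ) := Real.sq_sqrt (by norm_num)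
  have haev : (aeval (Real.sqrt 2)) (X ^ 2 - C (2:L)) = 0 := by
    simp only [map_sub, map_pow, aeval_X, aeval_C, map_ofNat]
    rw [hs2]
    norm_num
  have hirr : Irreducible (X ^ 2 - C (2:L)) :=
    X_pow_sub_C_irreducible_of_prime Nat.prime_two hL
  have hmono : (X ^ 2 - C (2:L)).Monic := monic_X_pow_sub_C _ two_ne_zero
  have hmin : minpoly L (Real.sqrt 2) = X ^ 2 - C (2:L) :=
    (minpoly.eq_of_irreducible_of_monic hirr haev hmono).symm
  have hint : IsIntegral L (Real.sqrt 2) := ⟨X ^ 2 - C (2:L), hmono, haev⟩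
  have hy : (aeval (-Real.sqrt 2))
      (minpoly L (IntermediateField.adjoin.powerBasis hint).gen) = 0 := by
    rw [IntermediateField.adjoin.powerBasis_gen, IntermediateField.minpoly_gen, hmin]
    simp only [map_sub, map_pow, aeval_X, aeval_C, map_ofNat]
    rw [neg_pow, hs2]
    norm_num
  refine ⟨(IntermediateField.adjoin.powerBasis hint).lift (-Real.sqrt 2) hy, ?_⟩
  have := (IntermediateField.adjoin.powerBasis hint).lift_gen (-Real.sqrt 2) hy
  rwa [IntermediateField.adjoin.powerBasis_gen] at this

/-- The real quadratic field ℚ(√d) as a subfield of ℝ. -/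
noncomputable def Qsqrt (d : ℕ) : IntermediateField ℚ ℝ :=
  IntermediateField.adjoin ℚ {Real.sqrt d}

/-- `z` is a unit of the ring of integers of the subfield `K` of ℝ. -/
def IsUnitOf (K : IntermediateField ℚ ℝ) (z : ℝ) : Prop :=
  z ∈ K ∧ z ≠ 0 ∧ IsIntegral ℤ z ∧ IsIntegral ℤ z⁻¹

/-- `ε` is the fundamental unit of the real quadratic field `K`. -/
def IsFundUnit (K : IntermediateField ℚ ℝ) (ε : ℝ) : Prop :=
  IsUnitOf K ε ∧ 1 < ε ∧
    ∀ z : ℝ, IsUnitOf K z → ∃ n : ℤ, z = ε ^ n ∨ z = -(ε ^ n)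

set_option maxHeartbeats 1600000 in
theorem stmt7 (p q : ℕ) (hp : p.Prime) (hq : q.Prime) (hpq : p ≠ q)
    (hp4 : p % 4 = 1) (hq4 : q % 4 = 3)
    (ε2 εpq ε2pq : ℝ)
    (hε2 : IsFundUnit (Qsqrt 2) ε2)
    (hεpq : IsFundUnit (Qsqrt (p * q)) εpq)
    (hε2pq : IsFundUnit (Qsqrt (2 * p * q)) ε2pq) :
    let F : IntermediateField ℚ ℝ :=
      IntermediateField.adjoin ℚ {Real.sqrt 2, Real.sqrt (p * q)}
    ∀ j k l : ℕ, j ≤ 1 → k ≤ 1 → l ≤ 1 →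
      ¬ ∃ w : ℝ, w ∈ F ∧
        w ^ 2 = (2 + Real.sqrt 2) * ε2 ^ j * εpq ^ k * ε2pq ^ l := by
  intro F j k l hj hk hl
  rintro ⟨w, hwF, hw2⟩
  -- basic facts
  have hp2 : p ≠ 2 := by rintro rfl; norm_num at hp4
  have hq2 : q ≠ 2 := by rintro rfl; norm_num at hq4
  have hnsq : ¬ IsSquare (p * q) := nsq_pq hp hq hpq
  have hnsq2 : ¬ IsSquare (2 * (p * q)) := by
    rw [← mul_assoc]; exact nsq_2pq hp hq hp2 hq2
  set s2 : ℝ := Real.sqrt 2 with hs2def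
  set sm : ℝ := Real.sqrt ((p * q : ℕ) : ℝ) with hsmdef
  have hs2mul : s2 * s2 = 2 := Real.mul_self_sqrt (by norm_num)
  have hsmmul : sm * sm = ((p * q : ℕ) : ℝ) := Real.mul_self_sqrt (by positivity)
  have hsmmul' : sm * sm = (p : ℝ) * (q : ℝ) := by rw [hsmmul]; push_cast; ring
  have hirrm : Irrational sm := irrational_sqrt_natCast_iff.mpr hnsq
  -- the quadratic field L = ℚ(√(pq))
  set L : IntermediateField ℚ ℝ := Qsqrt (p * q) with hLdef
  have hsmL : sm ∈ L := IntermediateField.mem_adjoin_simple_self ℚ sm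
  have hrat : ∀ (a : ℚ), algebraMap ℚ ℝ a = (a : ℝ) := fun a => eq_ratCast _ a
  have repQ : ∀ (r : ℝ) (c : ℚ), r * r = (c : ℝ) → ∀ x : ℝ,
      x ∈ IntermediateField.adjoin ℚ {r} → ∃ e f : ℚ, x = (e : ℝ) + (f : ℝ) * r := by
    intro r c hc x hx
    obtain ⟨e, f, hef⟩ := rep_quad r c (by rw [hrat]; exact hc) hx
    exact ⟨e, f, by rwa [hrat, hrat] at hef⟩
  have repL : ∀ x : ℝ, x ∈ L → ∃ e f : ℚ, x = (e : ℝ) + (f : ℝ) * sm := by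
    intro x hx
    exact repQ sm ((p * q : ℕ) : ℚ) (by rw [hsmmul]; push_cast; ring) x hx
  have hL2 : ∀ b : L, b ^ 2 ≠ 2 := by
    intro b hb
    have hbr : (b : ℝ) ^ 2 = 2 := by
      have h' : ((b ^ 2 : L) : ℝ) = ((2 : L) : ℝ) := congrArg Subtype.val hb
      push_cast at h'
      exact h'
    obtain ⟨e, f, hef⟩ := repL b b.2
    rw [hef] at hbr
    exact no_sqrt2 hnsq hnsq2 e f hbr
  set F2 : IntermediateField L ℝ := L⟮s2⟯ with hF2def
  obtain ⟨σ, hσgen⟩ := conj_data L hL2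
  -- memberships
  have hs2F2 : s2 ∈ F2 := IntermediateField.mem_adjoin_simple_self L s2
  have hLF2 : ∀ x : ℝ, x ∈ L → x ∈ F2 := by
    intro x hx
    exact F2.algebraMap_mem ⟨x, hx⟩
  have hsmF2 : sm ∈ F2 := hLF2 sm hsmL
  have hcast2 : ((2 : ℕ) : ℝ) = (2 : ℝ) := by norm_num
  have hcastm : Real.sqrt ((p : ℝ) * (q : ℝ)) = sm := by rw [hsmdef]; push_cast; ring_nf
  have hs2m : Real.sqrt ((2 * p * q : ℕ) : ℝ) = s2 * sm := by
    rw [hs2def, hsmdef, ← Real.sqrt_mul (by norm_num : (0:ℝ) ≤ 2)]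
    push_cast; ring_nf
  have hwF2 : w ∈ F2 := by
    have hle : F ≤ F2.restrictScalars ℚ := by
      apply IntermediateField.adjoin_le_iff.mpr
      intro x hx
      rcases hx with rfl | hx
      · exact hs2F2
      · rcases hx with rfl
        rw [hcastm]
        exact hsmF2
    exact hle hwF
  have hε2F2 : ε2 ∈ F2 := by
    have hle : Qsqrt 2 ≤ F2.restrictScalars ℚ := by
      apply IntermediateField.adjoin_le_iff.mpr
      intro x hx
      rcases hx with rfl
      rw [hcast2]
      exact hs2F2
    exact hle hε2.1.1
  have hεpqL : εpq ∈ L := hεpq.1.1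
  have hεpqF2 : εpq ∈ F2 := hLF2 εpq hεpqL
  have hε2pqF2 : ε2pq ∈ F2 := by
    have hle : Qsqrt (2 * p * q) ≤ F2.restrictScalars ℚ := by
      apply IntermediateField.adjoin_le_iff.mpr
      intro x hx
      rcases hx with rfl
      rw [hs2m]
      exact mul_mem hs2F2 hsmF2
    exact hle hε2pq.1.1
  -- representations
  obtain ⟨u, v, huv⟩ : ∃ u v : ℚ, ε2 = (u : ℝ) + (v : ℝ) * s2 := by
    apply repQ s2 2 (by rw [hs2mul]; norm_num) ε2
    have := hε2.1.1
    rwa [Qsqrt, hcast2] at this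
  obtain ⟨s, t, hst⟩ : ∃ s t : ℚ, εpq = (s : ℝ) + (t : ℝ) * sm :=
    repL εpq hεpqL
  obtain ⟨g, h', hgh⟩ : ∃ g h' : ℚ, ε2pq = (g : ℝ) + (h' : ℝ) * (s2 * sm) := by
    obtain ⟨g, h', hgh⟩ := repQ (Real.sqrt ((2 * p * q : ℕ) : ℝ)) ((2 * p * q : ℕ) : ℚ)
      (by rw [Real.mul_self_sqrt (by positivity)]; push_cast; ring) ε2pq hε2pq.1.1
    exact ⟨g, h', by rwa [hs2m] at hgh⟩
  obtain ⟨XX, YY, hXY⟩ : ∃ X Y : L, w = (X : ℝ) + (Y : ℝ) * s2 := by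
    obtain ⟨X, Y, hXY⟩ := rep_quad (K := L) s2 (2 : L)
      (by rw [hs2mul, map_ofNat]) hwF2
    exact ⟨X, Y, hXY⟩
  -- sigma computations
  have hσ : ∀ (x : F2) (z1 z2 : L), (x : ℝ) = (z1 : ℝ) + (z2 : ℝ) * s2 →
      σ x = (z1 : ℝ) - (z2 : ℝ) * s2 := by
    intro x z1 z2 hx
    have hx2 : x = algebraMap L F2 z1 + algebraMap L F2 z2 * AdjoinSimple.gen L s2 := by
      apply Subtype.ext
      push_cast
      rw [hx]
      rfl
    rw [hx2, map_add, map_mul, σ.commutes, σ.commutes, hσgen]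
    show (z1 : ℝ) + (z2 : ℝ) * (-s2) = _
    ring
  -- elements of F2
  have h2L : (2:ℝ) ∈ L := by
    rw [show (2:ℝ) = 1 + 1 by norm_num]
    exact add_mem (one_mem L) (one_mem L)
  have hQL : ∀ a : ℚ, ((a:ℝ)) ∈ L := fun a => SubfieldClass.ratCast_mem L a
  set W : F2 := (⟨w, hwF2⟩ : F2) with hWdef
  set E2 : F2 := (⟨ε2, hε2F2⟩ : F2) with hE2def
  set Epq : F2 := (⟨εpq, hεpqF2⟩ : F2) with hEpqdef
  set E2pq : F2 := (⟨ε2pq, hε2pqF2⟩ : F2) with hE2pqdef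
  set T2 : F2 := (⟨2 + s2, add_mem (hLF2 2 h2L) hs2F2⟩ : F2) with hT2def
  -- sigma images
  have hσW : σ W = (XX : ℝ) - (YY : ℝ) * s2 := hσ W XX YY hXY
  have hσE2 : σ E2 = (u : ℝ) - (v : ℝ) * s2 :=
    hσ E2 ⟨(u:ℝ), hQL u⟩ ⟨(v:ℝ), hQL v⟩ huv
  have hσEpq : σ Epq = εpq := by
    have := hσ Epq ⟨εpq, hεpqL⟩ 0 (by push_cast; ring)
    rw [this]; push_cast; ring
  have hσE2pq : σ E2pq = (g : ℝ) - (h' : ℝ) * (s2 * sm) := by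
    have := hσ E2pq ⟨(g:ℝ), hQL g⟩ (⟨(h':ℝ), hQL h'⟩ * ⟨sm, hsmL⟩)
      (by push_cast; show ε2pq = _; rw [hgh]; ring)
    rw [this]; push_cast; ring
  have hσT2 : σ T2 = 2 - s2 := by
    have := hσ T2 ⟨(2:ℝ), h2L⟩ 1 (by push_cast; ring)
    rw [this]; push_cast; ring
  -- the equation in F2 and its image under σ
  have hEqF2 : W ^ 2 = T2 * E2 ^ j * Epq ^ k * E2pq ^ l := by
    apply Subtype.ext
    push_cast
    exact hw2
  have hσEq := congrArg σ hEqF2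
  simp only [map_pow, map_mul] at hσEq
  rw [hσW, hσT2, hσE2, hσEpq, hσE2pq] at hσEq
  -- positivity
  have hε2pos : (0:ℝ) < ε2 := lt_trans one_pos hε2.2.1
  have hεpqpos : (0:ℝ) < εpq := lt_trans one_pos hεpq.2.1
  have hε2pqpos : (0:ℝ) < ε2pq := lt_trans one_pos hε2pq.2.1
  -- integrality transfer
  have hIntF2 : ∀ x : F2, IsIntegral ℤ (x : ℝ) → IsIntegral ℤ x := by
    intro x hx
    apply (isIntegral_algHom_iff (x := x) (F2.val.toRingHom.toIntAlgHom)
      (fun a b hab => Subtype.ext hab)).mp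
    exact hx
  have hσint : ∀ x : F2, IsIntegral ℤ (x:ℝ) → IsIntegral ℤ (σ x) := fun x hx =>
    (hIntF2 x hx).map σ.toRingHom.toIntAlgHom
  have hσinj : Function.Injective σ := σ.toRingHom.injective
  -- the two norms are ±1
  set M : ℚ := ((p*q : ℕ) : ℚ) with hMdef
  have hn2 : (u^2 - 2*v^2 : ℚ) = 1 ∨ (u^2 - 2*v^2 : ℚ) = -1 := by
    apply rat_unit ε2 (σ E2) hε2.1.2.2.1 (hσint E2 hε2.1.2.2.1) hε2.1.2.2.2
    · rw [← map_inv₀ σ]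
      apply hσint
      rw [show ((E2⁻¹ : F2) : ℝ) = ε2⁻¹ from map_inv₀ F2.val E2]
      exact hε2.1.2.2.2
    · exact ne_of_gt hε2pos
    · intro h0
      apply ne_of_gt hε2pos
      have : E2 = 0 := hσinj (by rw [h0, map_zero])
      exact congrArg Subtype.val this
    · rw [huv, hσE2]; push_cast; linear_combination (-(v:ℝ)^2) * hs2mul
  have hn3 : (g^2 - 2*M*h'^2 : ℚ) = 1 ∨ (g^2 - 2*M*h'^2 : ℚ) = -1 := by
    apply rat_unit ε2pq (σ E2pq) hε2pq.1.2.2.1 (hσint E2pq hε2pq.1.2.2.1) hε2pq.1.2.2.2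
    · rw [← map_inv₀ σ]
      apply hσint
      rw [show ((E2pq⁻¹ : F2) : ℝ) = ε2pq⁻¹ from map_inv₀ F2.val E2pq]
      exact hε2pq.1.2.2.2
    · exact ne_of_gt hε2pqpos
    · intro h0
      apply ne_of_gt hε2pqpos
      have : E2pq = 0 := hσinj (by rw [h0, map_zero])
      exact congrArg Subtype.val this
    · rw [hgh, hσE2pq, hMdef]
      push_cast
      linear_combination (-(h':ℝ)^2*(sm*sm)) * hs2mul + (-2*(h':ℝ)^2) * hsmmul'
  -- the key norm equation
  set N : ℝ := w * σ W with hNdef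
  have hNL : ∃ e f : ℚ, N = (e:ℝ) + (f:ℝ) * sm := by
    have hZ : N = ((XX^2 - 2*YY^2 : L) : ℝ) := by
      have hc2 : ((2:L):ℝ) = 2 := map_ofNat (algebraMap L ℝ) 2
      push_cast [hc2]
      rw [hNdef, hXY, hσW]
      linear_combination (-((YY:ℝ))^2) * hs2mul
    obtain ⟨e, f, hef⟩ := repL _ (XX^2 - 2*YY^2 : L).2
    exact ⟨e, f, by rw [hZ, hef]⟩
  have hNsq : N^2 = 2 * ((u^2-2*v^2:ℚ):ℝ)^j * εpq^(2*k) * ((g^2 - 2*M*h'^2 :ℚ):ℝ)^l := by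
    have e1 : (2 + s2) * (2 - s2) = (2:ℝ) := by linear_combination -hs2mul
    have e2 : ((u:ℝ) + v*s2) * ((u:ℝ) - v*s2) = ((u^2-2*v^2 : ℚ):ℝ) := by
      push_cast; linear_combination (-(v:ℝ)^2) * hs2mul
    have e3 : ((g:ℝ) + h'*(s2*sm)) * ((g:ℝ) - h'*(s2*sm)) = ((g^2 - 2*M*h'^2 : ℚ):ℝ) := by
      rw [hMdef]; push_cast
      linear_combination (-(h':ℝ)^2*(sm*sm)) * hs2mul + (-2*(h':ℝ)^2) * hsmmul'
    have h1 : N^2 = w^2 * (σ W)^2 := by rw [hNdef]; ring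
    rw [h1, hw2, hσW, hσEq, huv, hgh]
    conv_rhs => rw [← e1, ← e2, ← e3, mul_pow, mul_pow, two_mul k, pow_add]
    ring
  -- sign analysis
  have hpm : ∀ (a : ℚ), a = 1 ∨ a = -1 → ∀ n : ℕ, a ^ n = 1 ∨ a ^ n = -1 := by
    rintro a (rfl | rfl) n
    · left; exact one_pow n
    · rcases Nat.even_or_odd n with hn | hn
      · left; exact hn.neg_one_pow
      · right; exact hn.neg_one_pow
  have hNsq' : N^2 = 2 * εpq^(2*k) *
      (((u^2-2*v^2:ℚ)^j * (g^2-2*M*h'^2:ℚ)^l : ℚ) : ℝ) := by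
    rw [hNsq]; push_cast; ring
  have hNfin : N^2 = 2 * εpq^(2*k) := by
    rcases hpm _ hn2 j with h2j | h2j <;> rcases hpm _ hn3 l with h3l | h3l <;>
      rw [h2j, h3l] at hNsq' <;> norm_num at hNsq' <;>
      try exact hNsq'
    all_goals nlinarith [pow_pos hεpqpos (2*k), sq_nonneg N, hNsq']
  obtain ⟨e, f, hef⟩ := hNL
  interval_cases k
  · have hfin : ((e:ℝ) + (f:ℝ)*sm)^2 = 2 := by
      rw [← hef]
      simpa using hNfin
    exact no_sqrt2 hnsq hnsq2 e f hfin
  · -- k = 1 : divide by εpq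
    set nq : ℚ := s^2 - M*t^2 with hnqdef
    have hstprod : εpq * ((s:ℝ) - t*sm) = (nq:ℝ) := by
      rw [hst, hnqdef, hMdef]; push_cast
      linear_combination (-(t:ℝ)^2) * hsmmul'
    have hstne : (s:ℝ) - (t:ℝ)*sm ≠ 0 := by
      intro h0
      by_cases ht : t = 0
      · rw [ht] at h0 hst
        push_cast at h0
        have hs0 : (s:ℝ) = 0 := by linarith [h0]
        rw [hs0] at hst
        push_cast at hst
        exact ne_of_gt hεpqpos (by linarith [hst])
      · apply hirrm
        refine ⟨s/t, ?_⟩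
        push_cast
        have ht' : (t:ℝ) ≠ 0 := by exact_mod_cast ht
        field_simp
        linarith [h0]
    have hx2 : (N/εpq)^2 = 2 := by
      rw [div_pow, hNfin]
      rw [show (2*1 : ℕ) = 2 from rfl]
      field_simp
    have hxval : N/εpq = (((e*s - f*t*M)/nq : ℚ):ℝ) + (((f*s - e*t)/nq : ℚ):ℝ) * sm := by
      have hNst : N*((s:ℝ) - t*sm) = ((e*s - f*t*M:ℚ):ℝ) + ((f*s - e*t:ℚ):ℝ) * sm := by
        rw [hef, hMdef]; push_cast
        linear_combination (-(f:ℝ)*(t:ℝ)) * hsmmul'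
      have hεne : εpq ≠ 0 := ne_of_gt hεpqpos
      have hnqne : (nq:ℝ) ≠ 0 := by
        rw [← hstprod]
        exact mul_ne_zero hεne hstne
      calc N/εpq = (N*((s:ℝ)-t*sm))/(εpq*((s:ℝ)-t*sm)) := by
            rw [mul_div_mul_right _ _ hstne]
        _ = (((e*s - f*t*M:ℚ):ℝ) + ((f*s - e*t:ℚ):ℝ) * sm)/(nq:ℝ) := by
            rw [hNst, hstprod]
        _ = _ := by push_cast; ring
    have hfin : ((((e*s - f*t*M)/nq : ℚ)):ℝ) + (((f*s - e*t)/nq : ℚ):ℝ) * sm = N/εpq :=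
      hxval.symm
    apply no_sqrt2 hnsq hnsq2 ((e*s - f*t*M)/nq) ((f*s - e*t)/nq)
    rw [hfin]
    exact hx2
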